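/- arXiv:1702.02445 — 3 statements merged into one kernel-verified Lean document; each statement's English description precedes it below -/
import Mathlib

section
/- Let W be a real symmetric positive definite n×n matrix such that I − W is positive definite (equivalently, the spectral norm of W is strictly less than 1). Then for every y ∈ ℝⁿ, the vector Wy is the unique minimizer over x ∈ ℝⁿ of the function x ↦ (1/2)‖x − y‖₂² + (1/2) xᵀ(W⁻¹ − I)x. In other words, the linear map y ↦ Wy is the proximity operator of the quadratic function g(x) = (1/2) xᵀ(W⁻¹ − I)x. -/
open Matrix

/-- If `W` is real symmetric positive definite with `I - W` positive definite, then for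
every `y`, `W y` is the unique minimizer of `x ↦ (1/2)‖x - y‖₂² + (1/2) xᵀ(W⁻¹ - I)x`,
i.e. `y ↦ W y` is the proximity operator of `g(x) = (1/2) xᵀ(W⁻¹ - I)x`. -/
theorem stmt_4 (n : ℕ) (W : Matrix (Fin n) (Fin n) ℝ)
    (hW : W.PosDef)
    (hW' : ((1 : Matrix (Fin n) (Fin n) ℝ) - W).PosDef)
    (y : Fin n → ℝ) :
    ∀ x : Fin n → ℝ, x ≠ W.mulVec y →
      (1 / 2) * (∑ i, (W.mulVec y i - y i) ^ 2) +
        (1 / 2) * ((W.mulVec y) ⬝ᵥ (W⁻¹ - 1).mulVec (W.mulVec y)) <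
      (1 / 2) * (∑ i, (x i - y i) ^ 2) +
        (1 / 2) * (x ⬝ᵥ (W⁻¹ - 1).mulVec x) := by
  intro x hx
  set u := W.mulVec y with hu
  have hdet : IsUnit W.det := isUnit_iff_ne_zero.mpr hW.det_pos.ne'
  have hAW : W⁻¹ * W = 1 := Matrix.nonsing_inv_mul W hdet
  have hAt : W⁻¹ᵀ = W⁻¹ := by
    rw [Matrix.transpose_nonsing_inv]
    congr 1
    simpa using hW.1.eq
  have e1 : W⁻¹ *ᵥ u = y := by
    rw [hu, Matrix.mulVec_mulVec, hAW, Matrix.one_mulVec]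
  have hz : x - u ≠ 0 := sub_ne_zero.mpr hx
  have hpos : 0 < (x - u) ⬝ᵥ W⁻¹ *ᵥ (x - u) := by
    simpa using hW.inv.dotProduct_mulVec_pos hz
  have e3 : u ⬝ᵥ W⁻¹ *ᵥ x = y ⬝ᵥ x := by
    rw [Matrix.dotProduct_mulVec, ← hAt, Matrix.vecMul_transpose, e1]
  have hsum1 : ∑ i, (u i - y i) ^ 2 = (u - y) ⬝ᵥ (u - y) := by
    simp [dotProduct, sq]
  have hsum2 : ∑ i, (x i - y i) ^ 2 = (x - y) ⬝ᵥ (x - y) := by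
    simp [dotProduct, sq]
  rw [hsum1, hsum2]
  have key :
      (1 / 2) * ((x - y) ⬝ᵥ (x - y)) + (1 / 2) * (x ⬝ᵥ (W⁻¹ - 1).mulVec x)
        - ((1 / 2) * ((u - y) ⬝ᵥ (u - y)) + (1 / 2) * (u ⬝ᵥ (W⁻¹ - 1).mulVec u))
      = (1 / 2) * ((x - u) ⬝ᵥ W⁻¹ *ᵥ (x - u)) := by
    simp only [Matrix.sub_mulVec, Matrix.one_mulVec, Matrix.mulVec_sub,
      dotProduct_sub, sub_dotProduct, e1, e3]
    rw [dotProduct_comm u y]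
    ring
  linarith [key, hpos]
end

section
/- There exist a scalar two-component zero-mean Gaussian mixture prior and a noise level for which the MMSE denoiser is expansive. Precisely: define for v > 0 the Gaussian density φ(y; v) = exp(−y²/(2v))/√(2πv), and for parameters α₁, α₂ ≥ 0 with α₁ + α₂ = 1, variances c₁, c₂ > 0, and σ > 0, define the scalar MMSE estimator f(y) = [α₁ φ(y; c₁+σ²)·(c₁/(c₁+σ²)) + α₂ φ(y; c₂+σ²)·(c₂/(c₂+σ²))] · y / [α₁ φ(y; c₁+σ²) + α₂ φ(y; c₂+σ²)]. Then there exist such α₁, α₂, c₁, c₂, σ and points y₁ ≠ y₂ ∈ ℝ with |f(y₁) − f(y₂)| > |y₁ − y₂|; in particular f is not nonexpansive. -/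
/-- The zero-mean Gaussian density with variance `v`, evaluated at `y`. -/
noncomputable def gaussPdf (v y : ℝ) : ℝ :=
  Real.exp (-(y ^ 2) / (2 * v)) / Real.sqrt (2 * Real.pi * v)

/-- The scalar MMSE denoiser for a two-component zero-mean Gaussian mixture prior with
weights `α₁, α₂`, variances `c₁, c₂`, and noise standard deviation `σ`. -/
noncomputable def mmseEstimator (α₁ α₂ c₁ c₂ σ y : ℝ) : ℝ :=
  (α₁ * gaussPdf (c₁ + σ ^ 2) y * (c₁ / (c₁ + σ ^ 2)) +
      α₂ * gaussPdf (c₂ + σ ^ 2) y * (c₂ / (c₂ + σ ^ 2))) * y /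
    (α₁ * gaussPdf (c₁ + σ ^ 2) y + α₂ * gaussPdf (c₂ + σ ^ 2) y)

/-- Simplification of the mixture ratio used in the proof of `stmt_7`. -/
lemma mmse_ratio (EE A B X s k1 k2 y : ℝ) (hs : 0 < s) (hE : 0 < EE) (hB : 0 < B)
    (hX : 0 < X) (hA : EE * A = X * B) :
    (EE / (EE + 10) * (A / s) * k1 + 10 / (EE + 10) * (B / (10 * s)) * k2) * y /
      (EE / (EE + 10) * (A / s) + 10 / (EE + 10) * (B / (10 * s)))
      = y * (X * k1 + k2) / (X + 1) := by
  have hA' : A = X * B / EE := by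
    rw [eq_div_iff hE.ne']
    linarith [hA]
  subst hA'
  have hE10 : (0:ℝ) < EE + 10 := by linarith
  rw [div_eq_div_iff (by positivity) (by positivity)]
  field_simp

/-- There exist a two-component zero-mean scalar Gaussian mixture prior and a noise level
for which the MMSE denoiser is expansive: some points `y₁ ≠ y₂` satisfy
`|f(y₁) − f(y₂)| > |y₁ − y₂|`, so `f` is not nonexpansive. -/
theorem stmt_7 :
    ∃ α₁ α₂ c₁ c₂ σ y₁ y₂ : ℝ,
      0 ≤ α₁ ∧ 0 ≤ α₂ ∧ α₁ + α₂ = 1 ∧ 0 < c₁ ∧ 0 < c₂ ∧ 0 < σ ∧ y₁ ≠ y₂ ∧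
      |y₁ - y₂| < |mmseEstimator α₁ α₂ c₁ c₂ σ y₁ - mmseEstimator α₁ α₂ c₁ c₂ σ y₂| := by
  have hE : (0:ℝ) < Real.exp 104 := Real.exp_pos _
  set E : ℝ := Real.exp 104 with hEdef
  have hE10 : (0:ℝ) < E + 10 := by linarith
  refine ⟨E/(E+10), 10/(E+10), 1/100, 19801/100, Real.sqrt (199/100), 20, 21,
    by positivity, by positivity, by field_simp, by norm_num, by norm_num,
    Real.sqrt_pos.2 (by norm_num), by norm_num, ?_⟩
  have hσ : Real.sqrt (199/100) ^ 2 = 199/100 := Real.sq_sqrt (by norm_num)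
  have hv1 : (1/100 : ℝ) + Real.sqrt (199/100) ^ 2 = 2 := by rw [hσ]; norm_num
  have hv2 : (19801/100 : ℝ) + Real.sqrt (199/100) ^ 2 = 200 := by rw [hσ]; norm_num
  have hπ : 0 < Real.pi := Real.pi_pos
  set s := Real.sqrt (2 * Real.pi * 2) with hs
  have hs0 : 0 < s := Real.sqrt_pos.2 (by positivity)
  have hs2 : Real.sqrt (2 * Real.pi * 200) = 10 * s := by
    rw [hs, show (2*Real.pi*200:ℝ) = 10^2 * (2*Real.pi*2) by ring,
      Real.sqrt_mul (by positivity), Real.sqrt_sq (by norm_num)]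
  have g1_20 : gaussPdf 2 20 = Real.exp (-100) / s := by
    unfold gaussPdf
    rw [← hs, show (-((20:ℝ)^2)/(2*2) : ℝ) = -100 by norm_num]
  have g2_20 : gaussPdf 200 20 = Real.exp (-1) / (10 * s) := by
    unfold gaussPdf
    rw [hs2, show (-((20:ℝ)^2)/(2*200) : ℝ) = -1 by norm_num]
  have g1_21 : gaussPdf 2 21 = Real.exp (-(441/4)) / s := by
    unfold gaussPdf
    rw [← hs, show (-((21:ℝ)^2)/(2*2) : ℝ) = -(441/4) by norm_num]
  have g2_21 : gaussPdf 200 21 = Real.exp (-(441/400)) / (10 * s) := by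
    unfold gaussPdf
    rw [hs2, show (-((21:ℝ)^2)/(2*200) : ℝ) = -(441/400) by norm_num]
  have hB : (0:ℝ) < Real.exp (-1) := Real.exp_pos _
  have hD : (0:ℝ) < Real.exp (-(441/400)) := Real.exp_pos _
  have hX : (0:ℝ) < Real.exp 5 := Real.exp_pos _
  have hZ : (0:ℝ) < Real.exp (-(2059/400)) := Real.exp_pos _
  have key1 : E * Real.exp (-100) = Real.exp 5 * Real.exp (-1) := by
    rw [hEdef, ← Real.exp_add, ← Real.exp_add]; norm_num
  have key2 : E * Real.exp (-(441/4)) = Real.exp (-(2059/400)) * Real.exp (-(441/400)) := by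
    rw [hEdef, ← Real.exp_add, ← Real.exp_add]; norm_num
  have f20 : mmseEstimator (E/(E+10)) (10/(E+10)) (1/100) (19801/100)
      (Real.sqrt (199/100)) 20
      = 20 * (Real.exp 5 * (1/100/2) + 19801/100/200) / (Real.exp 5 + 1) := by
    unfold mmseEstimator
    rw [hv1, hv2, g1_20, g2_20,
      mmse_ratio E (Real.exp (-100)) (Real.exp (-1)) (Real.exp 5) s _ _ 20
        hs0 hE hB hX key1]
  have f21 : mmseEstimator (E/(E+10)) (10/(E+10)) (1/100) (19801/100)
      (Real.sqrt (199/100)) 21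
      = 21 * (Real.exp (-(2059/400)) * (1/100/2) + 19801/100/200)
          / (Real.exp (-(2059/400)) + 1) := by
    unfold mmseEstimator
    rw [hv1, hv2, g1_21, g2_21,
      mmse_ratio E (Real.exp (-(441/4))) (Real.exp (-(441/400))) (Real.exp (-(2059/400))) s _ _ 21
        hs0 hE hD hZ key2]
  rw [f20, f21]
  have h1 : Real.exp 5 = (Real.exp 1) ^ 5 := by
    rw [← Real.exp_nat_mul]; norm_num
  have hx148 : (148:ℝ) ≤ Real.exp 5 := by
    have h2 : (2.7182818283:ℝ) < Real.exp 1 := Real.exp_one_gt_d9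
    calc (148:ℝ) ≤ (2.7182818283:ℝ)^5 := by norm_num
      _ ≤ (Real.exp 1)^5 := by
          apply pow_le_pow_left₀ (by norm_num) h2.le
      _ = Real.exp 5 := h1.symm
  have hzlt : Real.exp (-(2059/400)) < 1/148 :=
    calc Real.exp (-(2059/400)) < Real.exp (-5) := Real.exp_lt_exp.2 (by norm_num)
      _ = (Real.exp 5)⁻¹ := Real.exp_neg 5
      _ ≤ 148⁻¹ := inv_anti₀ (by norm_num) hx148
      _ = 1/148 := by norm_num
  set X := Real.exp 5
  set Z := Real.exp (-(2059/400))
  have h20 : 20 * (X * (1/100/2) + 19801/100/200) / (X + 1) < 1/4 := by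
    rw [div_lt_iff₀ (by positivity)]
    nlinarith
  have h21 : (20:ℝ) < 21 * (Z * (1/100/2) + 19801/100/200) / (Z + 1) := by
    rw [lt_div_iff₀ (by positivity)]
    nlinarith
  rw [show |(20:ℝ) - 21| = 1 by norm_num, abs_sub_comm, abs_of_pos (by linarith)]
  linarith
end

section
/- (Eckstein–Bertsekas ADMM convergence, exact-minimization finite-dimensional version.) Let f : ℝⁿ → ℝ and g : ℝᵐ → ℝ be convex continuous functions, let H : ℝⁿ → ℝᵐ be an injective linear map, and let ρ > 0. Suppose sequences (x^k) in ℝⁿ and (v^k), (u^k) in ℝᵐ satisfy, for every k: x^{k+1} minimizes x ↦ f(x) + (ρ/2)‖Hx − v^k − u^k‖₂² over ℝⁿ; v^{k+1} minimizes v ↦ g(v) + (ρ/2)‖Hx^{k+1} − v − u^k‖₂² over ℝᵐ; and u^{k+1} = u^k − Hx^{k+1} + v^{k+1}. If the function x ↦ f(x) + g(Hx) attains its minimum on ℝⁿ, then the sequence (x^k) converges to a minimizer of x ↦ f(x) + g(Hx). -/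
set_option maxHeartbeats 1000000
open Filter

local notation "⟪" x ", " y "⟫" => @inner ℝ _ _ x y

/-- If `x̄` minimizes `φ + (ρ/2)‖A · - b‖²` with `φ` convex, then the first-order
condition holds: `φ x̄ - ρ⟪A x̄ - b, A z - A x̄⟫ ≤ φ z` for all `z`. -/
lemma subgrad_of_min {E F : Type*} [NormedAddCommGroup E] [InnerProductSpace ℝ E]
    [NormedAddCommGroup F] [InnerProductSpace ℝ F]
    (φ : E → ℝ) (hφ : ConvexOn ℝ Set.univ φ)
    (A : E →ₗ[ℝ] F) (b : F) (ρ : ℝ) (hρ : 0 < ρ) (xb : E)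
    (hmin : ∀ z, φ xb + ρ / 2 * ‖A xb - b‖ ^ 2 ≤ φ z + ρ / 2 * ‖A z - b‖ ^ 2) :
    ∀ z, φ xb - ρ * ⟪A xb - b, A z - A xb⟫ ≤ φ z := by
  intro z
  set d : E := z - xb with hd
  -- key inequality for each t ∈ (0,1]
  have key : ∀ t : ℝ, 0 < t → t ≤ 1 →
      0 ≤ (φ z - φ xb + ρ * ⟪A xb - b, A d⟫) + t * (ρ / 2 * ‖A d‖ ^ 2) := by
    intro t ht ht1
    have hconv := hφ.2 (Set.mem_univ xb) (Set.mem_univ z) (by linarith : (0:ℝ) ≤ 1 - t)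
      (le_of_lt ht) (by ring)
    have hpt : (1 - t) • xb + t • z = xb + t • d := by
      rw [hd]; module
    rw [hpt] at hconv
    have hmin' := hmin (xb + t • d)
    have hexp : ‖A (xb + t • d) - b‖ ^ 2
        = ‖A xb - b‖ ^ 2 + 2 * (t * ⟪A xb - b, A d⟫) + t ^ 2 * ‖A d‖ ^ 2 := by
      have : A (xb + t • d) - b = (A xb - b) + t • (A d) := by
        rw [map_add, map_smul]; abel
      rw [this, norm_add_sq_real, real_inner_smul_right, norm_smul]
      simp [mul_pow]
    rw [hexp] at hmin'
    have h2 : φ (xb + t • d) ≤ (1 - t) * φ xb + t * φ z := by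
      simpa [smul_eq_mul] using hconv
    nlinarith [hmin', h2]
  -- let t → 0 along 1/(k+1)
  have hseq : ∀ k : ℕ, 0 ≤ (φ z - φ xb + ρ * ⟪A xb - b, A d⟫)
      + (1 / (k + 1 : ℝ)) * (ρ / 2 * ‖A d‖ ^ 2) := by
    intro k
    refine key _ (by positivity) ?_
    rw [div_le_one (by positivity)]
    linarith [Nat.cast_nonneg (α := ℝ) k]
  have hlim : Tendsto (fun k : ℕ => (φ z - φ xb + ρ * ⟪A xb - b, A d⟫)
      + (1 / (k + 1 : ℝ)) * (ρ / 2 * ‖A d‖ ^ 2)) atTop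
      (nhds (φ z - φ xb + ρ * ⟪A xb - b, A d⟫)) := by
    have : Tendsto (fun n : ℕ => 1 / ((n : ℝ) + 1)) atTop (nhds 0) :=
      tendsto_one_div_add_atTop_nhds_zero_nat
    have h2 := this.mul_const (ρ / 2 * ‖A d‖ ^ 2)
    rw [zero_mul] at h2
    simpa using tendsto_const_nhds.add h2
  have h0 : 0 ≤ φ z - φ xb + ρ * ⟪A xb - b, A d⟫ := ge_of_tendsto' hlim hseq
  have : A d = A z - A xb := by rw [hd, map_sub]
  rw [this] at h0
  linarith



/-- Existence of a Lagrange multiplier (saddle point) for `min f(x) + g(Hx)`,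
given a primal minimizer. -/
lemma saddle_exists {n m : ℕ}
    (f : EuclideanSpace ℝ (Fin n) → ℝ) (g : EuclideanSpace ℝ (Fin m) → ℝ)
    (hf_convex : ConvexOn ℝ Set.univ f)
    (hg_convex : ConvexOn ℝ Set.univ g) (hg_cont : Continuous g)
    (H : EuclideanSpace ℝ (Fin n) →ₗ[ℝ] EuclideanSpace ℝ (Fin m))
    (ρ : ℝ) (hρ : 0 < ρ)
    (xs : EuclideanSpace ℝ (Fin n)) (hxs : ∀ z, f xs + g (H xs) ≤ f z + g (H z)) :
    ∃ us : EuclideanSpace ℝ (Fin m),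
      ∀ z w, f xs + g (H xs) ≤ f z + g w + ρ * ⟪us, w - H z⟫ := by
  classical
  set M : ℝ := f xs + g (H xs) with hM
  set S : Set (EuclideanSpace ℝ (Fin m) × ℝ) :=
    {q | ∃ z, f z + g (H z + q.1) < q.2} with hS
  have hSconv : Convex ℝ S := by
    rintro ⟨p, t⟩ ⟨z, hz⟩ ⟨p', t'⟩ ⟨z', hz'⟩ a b ha hb hab
    refine ⟨a • z + b • z', ?_⟩
    simp only [Prod.smul_mk, Prod.mk_add_mk, Prod.fst, Prod.snd] at *
    have h1 : f (a • z + b • z') ≤ a * f z + b * f z' :=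
      hf_convex.2 (Set.mem_univ z) (Set.mem_univ z') ha hb hab
    have harg : H (a • z + b • z') + (a • p + b • p')
        = a • (H z + p) + b • (H z' + p') := by
      rw [map_add, map_smul, map_smul]; module
    have h2 : g (H (a • z + b • z') + (a • p + b • p'))
        ≤ a * g (H z + p) + b * g (H z' + p') := by
      rw [harg]
      exact hg_convex.2 (Set.mem_univ _) (Set.mem_univ _) ha hb hab
    have hstrict : a * (f z + g (H z + p)) + b * (f z' + g (H z' + p'))
        < a * t + b * t' := by
      rcases eq_or_lt_of_le ha with ha0 | ha0
      · have hb1 : b = 1 := by linarith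
        rw [← ha0, hb1]; simpa using hz'
      · rcases eq_or_lt_of_le hb with hb0 | hb0
        · have ha1 : a = 1 := by linarith
          rw [← hb0, ha1]; simpa using hz
        · have := mul_lt_mul_of_pos_left hz ha0
          have := mul_lt_mul_of_pos_left hz' hb0
          linarith
    calc f (a • z + b • z') + g (H (a • z + b • z') + (a • p + b • p'))
        ≤ a * (f z + g (H z + p)) + b * (f z' + g (H z' + p')) := by
          nlinarith [h1, h2]
      _ < a * t + b * t' := hstrict
  have hSopen : IsOpen S := by
    have : S = ⋃ z, {q : EuclideanSpace ℝ (Fin m) × ℝ | f z + g (H z + q.1) < q.2} := by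
      ext q; simp [hS, Set.mem_iUnion]
    rw [this]
    refine isOpen_iUnion fun z => ?_
    exact isOpen_lt (by continuity) continuous_snd
  have hnotmem : ((0 : EuclideanSpace ℝ (Fin m)), M) ∉ S := by
    rintro ⟨z, hz⟩
    simp only [add_zero] at hz
    exact absurd (hxs z) (by linarith)
  obtain ⟨L, hL⟩ := geometric_hahn_banach_open_point hSconv hSopen hnotmem
  set β : ℝ := L (0, 1) with hβ
  have hL00 : L ((0 : EuclideanSpace ℝ (Fin m)), 0) = 0 := by
    have : ((0 : EuclideanSpace ℝ (Fin m)), (0:ℝ)) = (0 : EuclideanSpace ℝ (Fin m) × ℝ) := rfl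
    rw [this, map_zero]
  have hLdec : ∀ (p : EuclideanSpace ℝ (Fin m)) (t : ℝ), L (p, t) = L (p, 0) + t * β := by
    intro p t
    have : (p, t) = (p, (0:ℝ)) + t • ((0 : EuclideanSpace ℝ (Fin m)), (1:ℝ)) := by
      simp [Prod.ext_iff]
    rw [this, map_add, map_smul, smul_eq_mul, hβ]
  have hmemS : ∀ (z : EuclideanSpace ℝ (Fin n)) (w : EuclideanSpace ℝ (Fin m)) (t : ℝ),
      f z + g w < t → (w - H z, t) ∈ S := by
    intro z w t ht
    exact ⟨z, by simpa using ht⟩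
  have hβneg : β < 0 := by
    have h1 := hL _ (hmemS xs (H xs) (M + 1) (by simp [hM]))
    have hA := hLdec (H xs - H xs) (M + 1)
    have hB := hLdec 0 M
    have hE : H xs - H xs = (0 : EuclideanSpace ℝ (Fin m)) := sub_self _
    rw [hE] at h1 hA
    rw [hA, hB, hL00] at h1
    linarith
  have hβne : β ≠ 0 := ne_of_lt hβneg
  -- key inequality : L(w - Hz, 0) + (f z + g w) * β ≤ M * β
  have hkey : ∀ (z : EuclideanSpace ℝ (Fin n)) (w : EuclideanSpace ℝ (Fin m)),
      L (w - H z, 0) + (f z + g w) * β ≤ M * β := by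
    intro z w
    have hε : ∀ ε : ℝ, 0 < ε →
        L (w - H z, 0) + (f z + g w + ε) * β < M * β := by
      intro ε hε
      have h3 := hL _ (hmemS z w (f z + g w + ε) (by linarith))
      have hA := hLdec (w - H z) (f z + g w + ε)
      have hB := hLdec 0 M
      rw [hA, hB, hL00] at h3
      linarith
    by_contra hcon
    push_neg at hcon
    set δ : ℝ := L (w - H z, 0) + (f z + g w) * β - M * β with hδ
    have hδ0 : 0 < δ := by rw [hδ]; linarith
    have hεpos : 0 < δ / (2 * (-β)) := div_pos hδ0 (by linarith)
    have h4 := hε _ hεpos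
    have h5 : (δ / (2 * (-β))) * β = -(δ / 2) := by
      field_simp
    nlinarith [h4, h5]
  refine ⟨(InnerProductSpace.toDual ℝ _).symm
    ((ρ * β)⁻¹ • (L.comp (ContinuousLinearMap.inl ℝ _ ℝ))), fun z w => ?_⟩
  have hinner : ⟪(InnerProductSpace.toDual ℝ _).symm
      ((ρ * β)⁻¹ • (L.comp (ContinuousLinearMap.inl ℝ _ ℝ))), w - H z⟫
      = (ρ * β)⁻¹ * L (w - H z, 0) := by
    rw [InnerProductSpace.toDual_symm_apply]
    simp
  rw [hinner]
  have hk := hkey z w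
  have hcoef : ρ * ((ρ * β)⁻¹ * L (w - H z, 0)) = L (w - H z, 0) / β := by
    field_simp
  rw [hcoef]
  have hcancel : L (w - H z, 0) / β * β = L (w - H z, 0) := div_mul_cancel₀ _ hβne
  nlinarith [hk, hβneg, hcancel]

private lemma quadid {F : Type*} [NormedAddCommGroup F] [InnerProductSpace ℝ F]
    (a a' c : F) : ‖a - c‖ ^ 2 + ‖a - a'‖ ^ 2 - ‖a' - c‖ ^ 2 = 2 * ⟪a - c, a - a'⟫ := by
  have h := norm_sub_sq_real (a - c) (a - a')
  rw [show (a - c) - (a - a') = a' - c from by abel] at h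
  linarith

/-- Left-inverse continuity for an injective linear map in finite dimensions. -/
private lemma tendsto_of_tendsto_image {n m : ℕ}
    (H : EuclideanSpace ℝ (Fin n) →ₗ[ℝ] EuclideanSpace ℝ (Fin m))
    (hH : Function.Injective H) (s : ℕ → EuclideanSpace ℝ (Fin n))
    (c : EuclideanSpace ℝ (Fin n)) (l : Filter ℕ)
    (h : Filter.Tendsto (fun j => H (s j)) l (nhds (H c))) :
    Filter.Tendsto s l (nhds c) := by
  classical
  set e := LinearEquiv.ofInjective H hH with he
  set T : (LinearMap.range H) →ₗ[ℝ] EuclideanSpace ℝ (Fin n) := e.symm.toLinearMap with hT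
  have hTcont : Continuous T := T.continuous_of_finiteDimensional
  have hTval : ∀ z (hz : H z ∈ LinearMap.range H), T ⟨H z, hz⟩ = z := by
    intro z hz
    have : (⟨H z, hz⟩ : LinearMap.range H) = e z := by
      ext; simp [he, LinearEquiv.ofInjective_apply]
    rw [this]
    simp [hT]
  have hsub : Filter.Tendsto (fun j => (⟨H (s j), LinearMap.mem_range_self H (s j)⟩ :
      LinearMap.range H)) l (nhds ⟨H c, LinearMap.mem_range_self H c⟩) := by
    rw [tendsto_subtype_rng]
    exact h
  have htend := (hTcont.tendsto _).comp hsub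
  have h1 : (⇑T ∘ fun j => (⟨H (s j), LinearMap.mem_range_self H (s j)⟩ :
      LinearMap.range H)) = s := by
    funext j; exact hTval _ _
  have h2 : T ⟨H c, LinearMap.mem_range_self H c⟩ = c := hTval _ _
  rwa [h1, h2] at htend

/-- Eckstein–Bertsekas ADMM convergence (exact-minimization, finite-dimensional version):
if `f`, `g` are convex and continuous, `H` is an injective linear map, `ρ > 0`, the
sequences satisfy the exact ADMM updates, and `x ↦ f(x) + g(Hx)` attains its minimum,
then `(x^k)` converges to a minimizer of `x ↦ f(x) + g(Hx)`. -/
theorem stmt_17 (n m : ℕ)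
    (f : EuclideanSpace ℝ (Fin n) → ℝ) (g : EuclideanSpace ℝ (Fin m) → ℝ)
    (hf_convex : ConvexOn ℝ Set.univ f) (hf_cont : Continuous f)
    (hg_convex : ConvexOn ℝ Set.univ g) (hg_cont : Continuous g)
    (H : EuclideanSpace ℝ (Fin n) →ₗ[ℝ] EuclideanSpace ℝ (Fin m))
    (hH : Function.Injective H)
    (ρ : ℝ) (hρ : 0 < ρ)
    (x : ℕ → EuclideanSpace ℝ (Fin n)) (v u : ℕ → EuclideanSpace ℝ (Fin m))
    (hx : ∀ k, ∀ z : EuclideanSpace ℝ (Fin n),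
      f (x (k + 1)) + ρ / 2 * ‖H (x (k + 1)) - v k - u k‖ ^ 2 ≤
        f z + ρ / 2 * ‖H z - v k - u k‖ ^ 2)
    (hv : ∀ k, ∀ w : EuclideanSpace ℝ (Fin m),
      g (v (k + 1)) + ρ / 2 * ‖H (x (k + 1)) - v (k + 1) - u k‖ ^ 2 ≤
        g w + ρ / 2 * ‖H (x (k + 1)) - w - u k‖ ^ 2)
    (hu : ∀ k, u (k + 1) = u k - H (x (k + 1)) + v (k + 1))
    (hmin : ∃ xs : EuclideanSpace ℝ (Fin n), ∀ z, f xs + g (H xs) ≤ f z + g (H z)) :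
    ∃ xs : EuclideanSpace ℝ (Fin n),
      (∀ z, f xs + g (H xs) ≤ f z + g (H z)) ∧
      Filter.Tendsto x Filter.atTop (nhds xs) := by
  classical
  obtain ⟨xs0, hxs0⟩ := hmin
  obtain ⟨us, hus⟩ := saddle_exists f g hf_convex hg_convex hg_cont H ρ hρ xs0 hxs0
  -- the two subgradient inequalities
  have hG : ∀ k w, g (v (k + 1)) - ρ * ⟪u (k + 1), w - v (k + 1)⟫ ≤ g w := by
    intro k w
    have hmin' : ∀ z, g (v (k + 1)) + ρ / 2 *
        ‖(-(LinearMap.id : EuclideanSpace ℝ (Fin m) →ₗ[ℝ] EuclideanSpace ℝ (Fin m))) (v (k+1))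
          - (u k - H (x (k+1)))‖ ^ 2 ≤
        g z + ρ / 2 *
        ‖(-(LinearMap.id : EuclideanSpace ℝ (Fin m) →ₗ[ℝ] EuclideanSpace ℝ (Fin m))) z
          - (u k - H (x (k+1)))‖ ^ 2 := by
      intro z
      have h1 : (-(LinearMap.id : EuclideanSpace ℝ (Fin m) →ₗ[ℝ] EuclideanSpace ℝ (Fin m)))
          (v (k+1)) - (u k - H (x (k+1))) = H (x (k+1)) - v (k+1) - u k := by
        simp; abel
      have h2 : (-(LinearMap.id : EuclideanSpace ℝ (Fin m) →ₗ[ℝ] EuclideanSpace ℝ (Fin m))) z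
          - (u k - H (x (k+1))) = H (x (k+1)) - z - u k := by
        simp; abel
      rw [h1, h2]
      exact hv k z
    have h := subgrad_of_min g hg_convex _ (u k - H (x (k+1))) ρ hρ (v (k+1)) hmin' w
    have e1 : (-(LinearMap.id : EuclideanSpace ℝ (Fin m) →ₗ[ℝ] EuclideanSpace ℝ (Fin m)))
        (v (k+1)) - (u k - H (x (k+1))) = -(u (k+1)) := by
      rw [hu k]; simp; abel
    have e2 : (-(LinearMap.id : EuclideanSpace ℝ (Fin m) →ₗ[ℝ] EuclideanSpace ℝ (Fin m))) w
        - (-(LinearMap.id : EuclideanSpace ℝ (Fin m) →ₗ[ℝ] EuclideanSpace ℝ (Fin m))) (v (k+1))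
        = -(w - v (k+1)) := by
      simp; abel
    rw [e1, e2, inner_neg_neg] at h
    exact h
  have hF : ∀ k z, f (x (k + 1)) +
      ρ * ⟪u (k + 1) - (v (k + 1) - v k), H z - H (x (k + 1))⟫ ≤ f z := by
    intro k z
    have hmin' : ∀ z', f (x (k+1)) + ρ / 2 * ‖H (x (k+1)) - (v k + u k)‖ ^ 2 ≤
        f z' + ρ / 2 * ‖H z' - (v k + u k)‖ ^ 2 := by
      intro z'
      have h1 : H (x (k+1)) - (v k + u k) = H (x (k+1)) - v k - u k := by abel
      have h2 : H z' - (v k + u k) = H z' - v k - u k := by abel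
      rw [h1, h2]
      exact hx k z'
    have h := subgrad_of_min f hf_convex H (v k + u k) ρ hρ (x (k+1)) hmin' z
    have e1 : H (x (k+1)) - (v k + u k) = -(u (k+1) - (v (k+1) - v k)) := by
      rw [hu k]; abel
    rw [e1, inner_neg_left] at h
    linarith
  -- key decrease estimate, parametric in the saddle point
  have hdec : ∀ (xb : EuclideanSpace ℝ (Fin n)) (ub : EuclideanSpace ℝ (Fin m)),
      (∀ z w, f xb + g (H xb) ≤ f z + g w + ρ * ⟪ub, w - H z⟫) →
      ∀ k, ‖u (k+2) - ub‖ ^ 2 + ‖v (k+2) - H xb‖ ^ 2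
          + ‖u (k+2) - u (k+1)‖ ^ 2 + ‖v (k+2) - v (k+1)‖ ^ 2
        ≤ ‖u (k+1) - ub‖ ^ 2 + ‖v (k+1) - H xb‖ ^ 2 := by
    intro xb ub hsad k
    have hr : v (k+2) - H (x (k+2)) = u (k+2) - u (k+1) := by
      rw [hu (k+1)]; abel
    have hI := hsad (x (k+2)) (v (k+2))
    rw [hr] at hI
    have hFk := hF (k+1) xb
    have hvbX : H xb - H (x (k+2)) = (H xb - v (k+2)) + (u (k+2) - u (k+1)) := by
      rw [← hr]; abel
    rw [hvbX] at hFk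
    have hGk := hG (k+1) (H xb)
    -- cross term nonpositivity
    have hc1 := hG (k+1) (v (k+1))
    have hc2 := hG k (v (k+2))
    have hcross : ⟪u (k+2) - u (k+1), v (k+2) - v (k+1)⟫ ≤ (0:ℝ) := by
      have hsumc : 0 ≤ ρ * ⟪u (k+2), v (k+1) - v (k+2)⟫
          + ρ * ⟪u (k+1), v (k+2) - v (k+1)⟫ := by linarith
      have hexp : ⟪u (k+2) - u (k+1), v (k+2) - v (k+1)⟫
          = -(⟪u (k+2), v (k+1) - v (k+2)⟫ + ⟪u (k+1), v (k+2) - v (k+1)⟫) := by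
        simp [inner_sub_left, inner_sub_right]
        ring
      nlinarith [hsumc, hρ, hexp]
    -- combine the three main inequalities (after dividing by ρ)
    have hsum : 0 ≤ ρ * ⟪ub, u (k+2) - u (k+1)⟫
        - ρ * ⟪u (k+2) - (v (k+2) - v (k+1)), (H xb - v (k+2)) + (u (k+2) - u (k+1))⟫
        + ρ * ⟪u (k+2), H xb - v (k+2)⟫ := by linarith
    have hdivρ : 0 ≤ ⟪ub, u (k+2) - u (k+1)⟫
        - ⟪u (k+2) - (v (k+2) - v (k+1)), (H xb - v (k+2)) + (u (k+2) - u (k+1))⟫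
        + ⟪u (k+2), H xb - v (k+2)⟫ := by nlinarith [hsum, hρ]
    -- expand inner products
    have E1 : ⟪u (k+2) - (v (k+2) - v (k+1)), (H xb - v (k+2)) + (u (k+2) - u (k+1))⟫
        - ⟪u (k+2), H xb - v (k+2)⟫
        = ⟪u (k+2), u (k+2) - u (k+1)⟫ - ⟪v (k+2) - v (k+1), H xb - v (k+2)⟫
          - ⟪v (k+2) - v (k+1), u (k+2) - u (k+1)⟫ := by
      simp [inner_sub_left, inner_sub_right, inner_add_right]
      ring
    have E2 : ⟪u (k+2) - ub, u (k+2) - u (k+1)⟫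
        = ⟪u (k+2), u (k+2) - u (k+1)⟫ - ⟪ub, u (k+2) - u (k+1)⟫ := by
      rw [inner_sub_left]
    have E3 : ⟪v (k+2) - H xb, v (k+2) - v (k+1)⟫
        + ⟪v (k+2) - v (k+1), H xb - v (k+2)⟫ = 0 := by
      have h := real_inner_comm (v (k+2) - v (k+1)) (H xb - v (k+2))
      have h2 : ⟪v (k+2) - H xb, v (k+2) - v (k+1)⟫
          = -⟪H xb - v (k+2), v (k+2) - v (k+1)⟫ := by
        rw [show v (k+2) - H xb = -(H xb - v (k+2)) from by abel, inner_neg_left]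
      linarith [h, h2]
    have E5 : ⟪v (k+2) - v (k+1), u (k+2) - u (k+1)⟫
        = ⟪u (k+2) - u (k+1), v (k+2) - v (k+1)⟫ := real_inner_comm _ _
    have Q1 := quadid (u (k+2)) (u (k+1)) ub
    have Q2 := quadid (v (k+2)) (v (k+1)) (H xb)
    linarith [hdivρ, E1, E2, E3, E5, Q1, Q2, hcross]
  -- Lyapunov sequence w.r.t. the certificate saddle point
  set W : ℕ → ℝ := fun k => ‖u (k+1) - us‖ ^ 2 + ‖v (k+1) - H xs0‖ ^ 2 with hW
  set δ : ℕ → ℝ := fun k => ‖u (k+2) - u (k+1)‖ ^ 2 + ‖v (k+2) - v (k+1)‖ ^ 2 with hδ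
  have hδnonneg : ∀ k, 0 ≤ δ k := fun k => by positivity
  have hWnonneg : ∀ k, 0 ≤ W k := fun k => by positivity
  have hstep : ∀ k, W (k+1) + δ k ≤ W k := by
    intro k
    have := hdec xs0 us hus k
    simp only [hW, hδ]
    linarith
  have hWanti : Antitone W := antitone_nat_of_succ_le fun k => by
    have := hstep k; have := hδnonneg k; linarith
  -- δ is summable, hence tends to 0
  have hsums : ∀ N, ∑ i ∈ Finset.range N, δ i ≤ W 0 := by
    intro N
    have htel : ∑ i ∈ Finset.range N, (W i - W (i+1)) = W 0 - W N :=
      Finset.sum_range_sub' W N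
    have hle : ∑ i ∈ Finset.range N, δ i ≤ ∑ i ∈ Finset.range N, (W i - W (i+1)) :=
      Finset.sum_le_sum fun i _ => by have := hstep i; linarith
    have := hWnonneg N
    linarith
  have hδsum : Summable δ := summable_of_sum_range_le hδnonneg hsums
  have hδ0 : Filter.Tendsto δ Filter.atTop (nhds 0) := hδsum.tendsto_atTop_zero
  -- consequences: successive differences tend to 0
  have hdiff : ∀ (w : ℕ → EuclideanSpace ℝ (Fin m)),
      (∀ k, ‖w (k+2) - w (k+1)‖ ^ 2 ≤ δ k) →
      Filter.Tendsto (fun k => w (k+1) - w k) Filter.atTop (nhds 0) := by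
    intro w hwb
    have hsq : Filter.Tendsto (fun k => ‖w (k+2) - w (k+1)‖ ^ 2) Filter.atTop (nhds 0) :=
      squeeze_zero (fun k => by positivity) hwb hδ0
    have hnorm : Filter.Tendsto (fun k => ‖w (k+2) - w (k+1)‖) Filter.atTop (nhds 0) := by
      have hs := (Real.continuous_sqrt.tendsto 0).comp hsq
      simp only [Function.comp, Real.sqrt_zero] at hs
      convert hs using 2 with k
      exact (Real.sqrt_sq (norm_nonneg _)).symm
    have h1 : Filter.Tendsto (fun k => w (k+2) - w (k+1)) Filter.atTop (nhds 0) :=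
      tendsto_zero_iff_norm_tendsto_zero.mpr hnorm
    have := (Filter.tendsto_add_atTop_iff_nat
      (f := fun k => w (k+1) - w k) (l := nhds 0) 1).mp ?_
    · exact this
    · convert h1 using 2 with k
  have hdu : Filter.Tendsto (fun k => u (k+1) - u k) Filter.atTop (nhds 0) :=
    hdiff u fun k => le_add_of_nonneg_right (by positivity)
  have hdv : Filter.Tendsto (fun k => v (k+1) - v k) Filter.atTop (nhds 0) :=
    hdiff v fun k => le_add_of_nonneg_left (by positivity)
  -- boundedness of the iterates (v (k+1), u (k+1))
  set R : ℝ := Real.sqrt (W 0) + ‖us‖ + ‖H xs0‖ with hR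
  have hbound : ∀ k, (v (k+1), u (k+1)) ∈ Metric.closedBall (0 : EuclideanSpace ℝ (Fin m) ×
      EuclideanSpace ℝ (Fin m)) R := by
    intro k
    have hWk := hWanti (Nat.zero_le k)
    have hu2 : ‖u (k+1) - us‖ ^ 2 ≤ W 0 := by
      have := sq_nonneg ‖v (k+1) - H xs0‖
      simp only [hW] at hWk ⊢
      nlinarith
    have hv2 : ‖v (k+1) - H xs0‖ ^ 2 ≤ W 0 := by
      have := sq_nonneg ‖u (k+1) - us‖
      simp only [hW] at hWk ⊢
      nlinarith
    have hu3 : ‖u (k+1) - us‖ ≤ Real.sqrt (W 0) := by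
      have h := Real.sqrt_le_sqrt hu2
      rwa [Real.sqrt_sq (norm_nonneg _)] at h
    have hv3 : ‖v (k+1) - H xs0‖ ≤ Real.sqrt (W 0) := by
      have h := Real.sqrt_le_sqrt hv2
      rwa [Real.sqrt_sq (norm_nonneg _)] at h
    have hun : ‖u (k+1)‖ ≤ Real.sqrt (W 0) + ‖us‖ := by
      have he : u (k+1) = (u (k+1) - us) + us := by abel
      calc ‖u (k+1)‖ = ‖(u (k+1) - us) + us‖ := by rw [← he]
        _ ≤ ‖u (k+1) - us‖ + ‖us‖ := norm_add_le _ _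
        _ ≤ _ := by linarith
    have hvn : ‖v (k+1)‖ ≤ Real.sqrt (W 0) + ‖H xs0‖ := by
      have he : v (k+1) = (v (k+1) - H xs0) + H xs0 := by abel
      calc ‖v (k+1)‖ = ‖(v (k+1) - H xs0) + H xs0‖ := by rw [← he]
        _ ≤ ‖v (k+1) - H xs0‖ + ‖H xs0‖ := norm_add_le _ _
        _ ≤ _ := by linarith
    rw [Metric.mem_closedBall, dist_zero_right]
    have : ‖((v (k+1), u (k+1)) : EuclideanSpace ℝ (Fin m) × EuclideanSpace ℝ (Fin m))‖
        = max ‖v (k+1)‖ ‖u (k+1)‖ := rfl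
    rw [this, hR]
    have hus0 : 0 ≤ ‖us‖ := norm_nonneg _
    have hHxs0 : 0 ≤ ‖H xs0‖ := norm_nonneg _
    exact max_le (by linarith) (by linarith)
  obtain ⟨p, -, φ, hφmono, hφtend⟩ := tendsto_subseq_of_bounded
    Metric.isBounded_closedBall hbound
  have hφatTop : Filter.Tendsto φ Filter.atTop Filter.atTop := hφmono.tendsto_atTop
  have hvlim : Filter.Tendsto (fun j => v (φ j + 1)) Filter.atTop (nhds p.1) := by
    have := (continuous_fst.tendsto p).comp hφtend
    exact this
  have hulim : Filter.Tendsto (fun j => u (φ j + 1)) Filter.atTop (nhds p.2) := by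
    have := (continuous_snd.tendsto p).comp hφtend
    exact this
  -- H x (k+1) = v (k+1) - (u (k+1) - u k)
  have hHx : ∀ k, H (x (k+1)) = v (k+1) - (u (k+1) - u k) := by
    intro k; rw [hu k]; abel
  have hHxlim : Filter.Tendsto (fun j => H (x (φ j + 1))) Filter.atTop (nhds p.1) := by
    have h1 : Filter.Tendsto (fun j => v (φ j + 1) - (u (φ j + 1) - u (φ j)))
        Filter.atTop (nhds (p.1 - 0)) := hvlim.sub (hdu.comp hφatTop)
    rw [sub_zero] at h1
    convert h1 using 2 with j
    exact hHx (φ j)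
  -- the limit is in the range of H
  have hclosed : IsClosed ((LinearMap.range H : Submodule ℝ (EuclideanSpace ℝ (Fin m))) :
      Set (EuclideanSpace ℝ (Fin m))) := Submodule.closed_of_finiteDimensional _
  have hpmem : p.1 ∈ LinearMap.range H :=
    hclosed.mem_of_tendsto hHxlim (Filter.Eventually.of_forall fun j =>
      LinearMap.mem_range_self H (x (φ j + 1)))
  obtain ⟨xinf, hxinf⟩ := hpmem
  have hxlim : Filter.Tendsto (fun j => x (φ j + 1)) Filter.atTop (nhds xinf) :=
    tendsto_of_tendsto_image H hH _ _ _ (by rw [hxinf]; exact hHxlim)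
  -- the limit point satisfies the saddle inequalities
  have hGinf : ∀ w, g p.1 - ρ * ⟪p.2, w - p.1⟫ ≤ g w := by
    intro w
    have hlhs : Filter.Tendsto
        (fun j => g (v (φ j + 1)) - ρ * ⟪u (φ j + 1), w - v (φ j + 1)⟫)
        Filter.atTop (nhds (g p.1 - ρ * ⟪p.2, w - p.1⟫)) := by
      have h1 : Filter.Tendsto (fun j => g (v (φ j + 1))) Filter.atTop (nhds (g p.1)) :=
        (hg_cont.tendsto p.1).comp hvlim
      have h2 : Filter.Tendsto (fun j => (⟪u (φ j + 1), w - v (φ j + 1)⟫ : ℝ))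
          Filter.atTop (nhds ⟪p.2, w - p.1⟫) :=
        hulim.inner (tendsto_const_nhds.sub hvlim)
      exact h1.sub ((tendsto_const_nhds (x := ρ)).mul h2)
    exact le_of_tendsto hlhs (Filter.Eventually.of_forall fun j => hG (φ j) w)
  have hFinf : ∀ z, f xinf + ρ * ⟪p.2, H z - H xinf⟫ ≤ f z := by
    intro z
    have hlhs : Filter.Tendsto
        (fun j => f (x (φ j + 1)) +
          ρ * ⟪u (φ j + 1) - (v (φ j + 1) - v (φ j)), H z - H (x (φ j + 1))⟫)
        Filter.atTop (nhds (f xinf + ρ * ⟪p.2, H z - H xinf⟫)) := by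
      have h1 : Filter.Tendsto (fun j => f (x (φ j + 1))) Filter.atTop (nhds (f xinf)) :=
        (hf_cont.tendsto xinf).comp hxlim
      have h2 : Filter.Tendsto (fun j => u (φ j + 1) - (v (φ j + 1) - v (φ j)))
          Filter.atTop (nhds (p.2 - 0)) := hulim.sub (hdv.comp hφatTop)
      rw [sub_zero] at h2
      have h3 : Filter.Tendsto (fun j => H z - H (x (φ j + 1))) Filter.atTop
          (nhds (H z - H xinf)) := by
        have := tendsto_const_nhds (x := H z) (f := Filter.atTop (α := ℕ)) |>.sub hHxlim
        rwa [← hxinf] at this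
      exact h1.add ((tendsto_const_nhds (x := ρ)).mul (h2.inner h3))
    exact le_of_tendsto hlhs (Filter.Eventually.of_forall fun j => hF (φ j) z)
  have hsadinf : ∀ z w, f xinf + g (H xinf) ≤ f z + g w + ρ * ⟪p.2, w - H z⟫ := by
    intro z w
    have h1 := hFinf z
    have h2 := hGinf w
    have hgp : g p.1 = g (H xinf) := by rw [hxinf]
    have hexp : ⟪p.2, w - H z⟫ = ⟪p.2, w - p.1⟫ - ⟪p.2, H z - H xinf⟫ := by
      rw [← hxinf]
      simp [inner_sub_right]
    rw [hgp] at h2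
    rw [hexp]
    linarith
  -- Lyapunov w.r.t. the limit saddle point tends to 0
  set W2 : ℕ → ℝ := fun k => ‖u (k+1) - p.2‖ ^ 2 + ‖v (k+1) - H xinf‖ ^ 2 with hW2
  have hW2anti : Antitone W2 := antitone_nat_of_succ_le fun k => by
    have := hdec xinf p.2 hsadinf k
    have h1 : (0:ℝ) ≤ ‖u (k+2) - u (k+1)‖ ^ 2 := by positivity
    have h2 : (0:ℝ) ≤ ‖v (k+2) - v (k+1)‖ ^ 2 := by positivity
    simp only [hW2]
    linarith
  have hW2sub : Filter.Tendsto (fun j => W2 (φ j)) Filter.atTop (nhds 0) := by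
    have h1 : Filter.Tendsto (fun j => ‖u (φ j + 1) - p.2‖ ^ 2 + ‖v (φ j + 1) - H xinf‖ ^ 2)
        Filter.atTop (nhds (‖p.2 - p.2‖ ^ 2 + ‖p.1 - H xinf‖ ^ 2)) := by
      have hu1 := ((hulim.sub (tendsto_const_nhds (x := p.2))).norm.pow 2)
      have hv1 := ((hvlim.sub (tendsto_const_nhds (x := H xinf))).norm.pow 2)
      exact hu1.add hv1
    rw [show ‖p.2 - p.2‖ ^ 2 + ‖p.1 - H xinf‖ ^ 2 = 0 from by
      rw [hxinf]; simp] at h1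
    exact h1
  have hW2nonneg : ∀ k, 0 ≤ W2 k := fun k => by positivity
  have hW2to0 : Filter.Tendsto W2 Filter.atTop (nhds 0) := by
    have hbdd : BddBelow (Set.range W2) := ⟨0, fun y ⟨k, hk⟩ => hk ▸ hW2nonneg k⟩
    have hinf := tendsto_atTop_ciInf hW2anti hbdd
    have hsub2 : Filter.Tendsto (fun j => W2 (φ j)) Filter.atTop (nhds (⨅ i, W2 i)) :=
      hinf.comp hφatTop
    rwa [tendsto_nhds_unique hsub2 hW2sub] at hinf
  -- convergence of the iterates
  have hvto : Filter.Tendsto (fun k => v (k+1)) Filter.atTop (nhds (H xinf)) := by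
    have hsq : Filter.Tendsto (fun k => ‖v (k+1) - H xinf‖ ^ 2) Filter.atTop (nhds 0) :=
      squeeze_zero (fun k => by positivity)
        (fun k => le_add_of_nonneg_left (by positivity)) hW2to0
    have hnorm : Filter.Tendsto (fun k => ‖v (k+1) - H xinf‖) Filter.atTop (nhds 0) := by
      have hs := (Real.continuous_sqrt.tendsto 0).comp hsq
      simp only [Function.comp, Real.sqrt_zero] at hs
      convert hs using 2 with k
      exact (Real.sqrt_sq (norm_nonneg _)).symm
    have := tendsto_zero_iff_norm_tendsto_zero.mpr hnorm
    have h2 := this.add (tendsto_const_nhds (x := H xinf))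
    rw [zero_add] at h2
    convert h2 using 2 with k
    abel
  have hHxto : Filter.Tendsto (fun k => H (x (k+1))) Filter.atTop (nhds (H xinf)) := by
    have h1 : Filter.Tendsto (fun k => v (k+1) - (u (k+1) - u k)) Filter.atTop
        (nhds (H xinf - 0)) := hvto.sub hdu
    rw [sub_zero] at h1
    convert h1 using 2 with k
    exact hHx k
  have hxto1 : Filter.Tendsto (fun k => x (k+1)) Filter.atTop (nhds xinf) :=
    tendsto_of_tendsto_image H hH _ _ _ hHxto
  have hxto : Filter.Tendsto x Filter.atTop (nhds xinf) :=
    (Filter.tendsto_add_atTop_iff_nat 1).mp hxto1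
  refine ⟨xinf, fun z => ?_, hxto⟩
  have := hsadinf z (H z)
  simpa using this
end
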